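/- For all reals λ > 0 and r ≥ 0, setting b = λπr², ∫_0^∞ 2λπ y · exp(−λπ y²) · ( ∫_{r+y}^∞ 8λπ x · exp(−4λπ x²) · (1 − exp(−λπ x²)) dx ) dy = (1/5)·exp(−4b) − (2/15)·exp(−5b) + √(πb) · [ (√6/9)·exp(−5b/6)·erfc((5/6)·√(6b)) − (4√5/25)·exp(−4b/5)·erfc((4/5)·√(5b)) ], where erfc(z) = (2/√π)·∫_z^∞ exp(−t²) dt. -/

import Mathlib

open Real MeasureTheory

/-- The complementary error function `erfc z = (2/√π) ∫_z^∞ exp(−t²) dt`. -/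
noncomputable def erfc (z : ℝ) : ℝ :=
  (2 / Real.sqrt π) * ∫ t in Set.Ioi z, Real.exp (-(t ^ 2))

open Set Filter


lemma erfc_int (z : ℝ) :
    ∫ t in Set.Ioi z, Real.exp (-(t ^ 2)) = (Real.sqrt π / 2) * erfc z := by
  rw [erfc]
  have h : Real.sqrt π ≠ 0 := by positivity
  field_simp

lemma integral_Ioi_comp_add (f : ℝ → ℝ) (a c : ℝ) :
    ∫ x in Set.Ioi a, f (x + c) = ∫ x in Set.Ioi (a + c), f x := by
  rw [← integral_indicator measurableSet_Ioi, ← integral_indicator measurableSet_Ioi,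
    ← integral_add_right_eq_self (Set.indicator (Set.Ioi (a + c)) f) c]
  congr 1
  ext x
  simp [Set.indicator_apply, Set.mem_Ioi, add_lt_add_iff_right]

lemma integrable_mes (k : ℝ) (hk : 0 < k) :
    Integrable (fun x : ℝ => x * Real.exp (-(k * x ^ 2))) := by
  have := integrable_mul_exp_neg_mul_sq hk
  simpa [neg_mul] using this

lemma integrable_es (k : ℝ) (hk : 0 < k) :
    Integrable (fun x : ℝ => Real.exp (-(k * x ^ 2))) := by
  have := integrable_exp_neg_mul_sq hk
  simpa [neg_mul] using this

lemma integral_Ioi_mul_exp (k s : ℝ) (hk : 0 < k) :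
    ∫ x in Set.Ioi s, x * Real.exp (-(k * x ^ 2)) = Real.exp (-(k * s ^ 2)) / (2 * k) := by
  have hderiv : ∀ x ∈ Set.Ici s,
      HasDerivAt (fun x => -Real.exp (-(k * x ^ 2)) / (2 * k))
        (x * Real.exp (-(k * x ^ 2))) x := by
    intro x _
    have d1 : HasDerivAt (fun x : ℝ => -(k * x ^ 2)) (-(k * (2 * x))) x := by
      exact (((hasDerivAt_pow 2 x).const_mul k).neg).congr_deriv (by norm_num)
    have d3 := (d1.exp.neg).div_const (2 * k)
    refine HasDerivAt.congr_deriv (f := fun x => -Real.exp (-(k * x ^ 2)) / (2 * k)) d3 ?_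
    field_simp
  have hlim : Tendsto (fun x : ℝ => -Real.exp (-(k * x ^ 2)) / (2 * k)) atTop (nhds 0) := by
    have h1 : Tendsto (fun x : ℝ => k * x ^ 2) atTop atTop :=
      (tendsto_pow_atTop two_ne_zero).const_mul_atTop hk
    have h2 : Tendsto (fun x : ℝ => Real.exp (-(k * x ^ 2))) atTop (nhds 0) :=
      Real.tendsto_exp_atBot.comp (tendsto_neg_atTop_atBot.comp h1)
    simpa using (h2.neg).div_const (2 * k)
  have := integral_Ioi_of_hasDerivAt_of_tendsto' hderiv
    ((integrable_mes k hk).integrableOn) hlim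
  rw [this]
  field_simp
  ring

lemma key (k μ : ℝ) (hk : 0 < k) (hμ : 0 ≤ μ) :
    ∫ y in Set.Ioi (0 : ℝ), y * Real.exp (-(k * (y + μ) ^ 2)) =
      Real.exp (-(k * μ ^ 2)) / (2 * k)
        - μ * (Real.sqrt π / (2 * Real.sqrt k)) * erfc (Real.sqrt k * μ) := by
  have h1 : ∫ y in Set.Ioi (0 : ℝ), y * Real.exp (-(k * (y + μ) ^ 2)) =
      ∫ u in Set.Ioi μ, (u - μ) * Real.exp (-(k * u ^ 2)) := by
    have ht := integral_Ioi_comp_add (fun u => (u - μ) * Real.exp (-(k * u ^ 2))) 0 μ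
    rw [zero_add] at ht
    rw [← ht]
    refine setIntegral_congr_fun measurableSet_Ioi fun y _ => by ring_nf
  rw [h1]
  have h2 : ∫ u in Set.Ioi μ, (u - μ) * Real.exp (-(k * u ^ 2)) =
      (∫ u in Set.Ioi μ, u * Real.exp (-(k * u ^ 2)))
        - ∫ u in Set.Ioi μ, μ * Real.exp (-(k * u ^ 2)) := by
    rw [← integral_sub ((integrable_mes k hk).integrableOn)
      (((integrable_es k hk).integrableOn).const_mul μ)]
    refine setIntegral_congr_fun measurableSet_Ioi fun u _ => by ring
  rw [h2, integral_const_mul, integral_Ioi_mul_exp k μ hk]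
  have h3 : ∫ u in Set.Ioi μ, Real.exp (-(k * u ^ 2)) =
      (Real.sqrt k)⁻¹ * ((Real.sqrt π / 2) * erfc (Real.sqrt k * μ)) := by
    have hsk : 0 < Real.sqrt k := Real.sqrt_pos.2 hk
    have hc : ∀ u : ℝ, Real.exp (-(k * u ^ 2)) =
        (fun t => Real.exp (-(t ^ 2))) (Real.sqrt k * u) := by
      intro u
      simp only [mul_pow, Real.sq_sqrt hk.le]
    calc ∫ u in Set.Ioi μ, Real.exp (-(k * u ^ 2))
        = ∫ u in Set.Ioi μ, (fun t => Real.exp (-(t ^ 2))) (Real.sqrt k * u) :=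
          setIntegral_congr_fun measurableSet_Ioi fun u _ => hc u
      _ = (Real.sqrt k)⁻¹ • ∫ t in Set.Ioi (Real.sqrt k * μ), Real.exp (-(t ^ 2)) :=
          by simpa using integral_comp_mul_left_Ioi (fun t => Real.exp (-(t ^ 2))) μ hsk
      _ = (Real.sqrt k)⁻¹ * ((Real.sqrt π / 2) * erfc (Real.sqrt k * μ)) := by
          rw [smul_eq_mul, erfc_int]
  rw [h3]
  have hsk : Real.sqrt k ≠ 0 := ne_of_gt (Real.sqrt_pos.2 hk)
  field_simp

lemma inner_int (l : ℝ) (hl : 0 < l) (s : ℝ) :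
    (∫ x in Set.Ioi s, 8 * l * π * x * Real.exp (-(4 * l * π * x ^ 2)) *
        (1 - Real.exp (-(l * π * x ^ 2))))
      = Real.exp (-(4 * (l * π) * s ^ 2)) - (4 / 5) * Real.exp (-(5 * (l * π) * s ^ 2)) := by
  have ha : 0 < l * π := mul_pos hl pi_pos
  have h4 : (0:ℝ) < 4 * (l * π) := by positivity
  have h5 : (0:ℝ) < 5 * (l * π) := by positivity
  have hstep : ∫ x in Set.Ioi s, 8 * l * π * x * Real.exp (-(4 * l * π * x ^ 2)) *
        (1 - Real.exp (-(l * π * x ^ 2)))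
      = (∫ x in Set.Ioi s, (8 * (l * π)) * (x * Real.exp (-(4 * (l * π) * x ^ 2))))
        - ∫ x in Set.Ioi s, (8 * (l * π)) * (x * Real.exp (-(5 * (l * π) * x ^ 2))) := by
    rw [← integral_sub (((integrable_mes _ h4).integrableOn).const_mul _)
      (((integrable_mes _ h5).integrableOn).const_mul _)]
    refine setIntegral_congr_fun measurableSet_Ioi fun x _ => ?_
    have e1 : Real.exp (-(5 * (l * π) * x ^ 2)) =
        Real.exp (-(4 * (l * π) * x ^ 2)) * Real.exp (-(l * π * x ^ 2)) := by
      rw [← Real.exp_add]; ring_nf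
    have e2 : -(4 * l * π * x ^ 2) = -(4 * (l * π) * x ^ 2) := by ring
    rw [e2, e1]; ring
  rw [hstep, integral_const_mul, integral_const_mul,
    integral_Ioi_mul_exp _ s h4, integral_Ioi_mul_exp _ s h5]
  field_simp
  ring

lemma outer_int (a r c : ℝ) (ha : 0 < a) (hr : 0 ≤ r) (hc : 0 < c) :
    ∫ y in Set.Ioi (0:ℝ), y * Real.exp (-(a * y ^ 2)) * Real.exp (-(c * a * (r + y) ^ 2))
      = Real.exp (-(c * a * r ^ 2)) / (2 * (a * (1 + c)))
        - Real.exp (-(c * a * r ^ 2 / (1 + c))) * (c * r / (1 + c)) *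
            (Real.sqrt π / (2 * Real.sqrt (a * (1 + c)))) *
            erfc (Real.sqrt (a * (1 + c)) * (c * r / (1 + c))) := by
  have hc1 : (0:ℝ) < 1 + c := by linarith
  have hk : 0 < a * (1 + c) := by positivity
  have hμ : 0 ≤ c * r / (1 + c) := by positivity
  have hstep : ∫ y in Set.Ioi (0:ℝ), y * Real.exp (-(a * y ^ 2)) * Real.exp (-(c * a * (r + y) ^ 2))
      = Real.exp (-(c * a * r ^ 2 / (1 + c))) *
          ∫ y in Set.Ioi (0:ℝ), y * Real.exp (-((a * (1 + c)) * (y + c * r / (1 + c)) ^ 2)) := by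
    rw [← integral_const_mul]
    refine setIntegral_congr_fun measurableSet_Ioi fun y _ => ?_
    have hexp : -(a * y ^ 2) + -(c * a * (r + y) ^ 2)
        = -(c * a * r ^ 2 / (1 + c)) + -((a * (1 + c)) * (y + c * r / (1 + c)) ^ 2) := by
      field_simp
      ring
    rw [mul_assoc, ← Real.exp_add, hexp, Real.exp_add]
    ring
  rw [hstep, key _ _ hk hμ, mul_sub]
  congr 1
  · rw [mul_div_assoc', ← Real.exp_add,
      show -(c * a * r ^ 2 / (1 + c)) + -(a * (1 + c) * (c * r / (1 + c)) ^ 2)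
        = -(c * a * r ^ 2) from by field_simp; ring]
  · ring

lemma int_aux (a c r : ℝ) (ha : 0 < a) (hc : 0 ≤ c) :
    IntegrableOn (fun y => y * Real.exp (-(a * y ^ 2)) * Real.exp (-(c * a * (r + y) ^ 2)))
      (Set.Ioi (0:ℝ)) := by
  refine Integrable.mono' ((integrable_mes a ha).integrableOn)
    (Continuous.aestronglyMeasurable (by fun_prop)) ?_
  rw [ae_restrict_iff' measurableSet_Ioi]
  filter_upwards with y hy
  have hy' : 0 < y := hy
  have h1 : Real.exp (-(c * a * (r + y) ^ 2)) ≤ 1 := by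
    rw [Real.exp_le_one_iff]
    have : 0 ≤ c * a * (r + y) ^ 2 := by positivity
    linarith
  have h2 : 0 < Real.exp (-(a * y ^ 2)) := Real.exp_pos _
  rw [Real.norm_eq_abs, abs_of_pos (by positivity)]
  calc y * Real.exp (-(a * y ^ 2)) * Real.exp (-(c * a * (r + y) ^ 2))
      ≤ y * Real.exp (-(a * y ^ 2)) * 1 := by
        apply mul_le_mul_of_nonneg_left h1 (by positivity)
    _ = y * Real.exp (-(a * y ^ 2)) := by ring

theorem stmt_11 (l r b : ℝ) (hl : 0 < l) (hr : 0 ≤ r) (hb : b = l * π * r ^ 2) :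
    ∫ y in Set.Ioi (0 : ℝ),
        2 * l * π * y * Real.exp (-(l * π * y ^ 2)) *
          (∫ x in Set.Ioi (r + y),
            8 * l * π * x * Real.exp (-(4 * l * π * x ^ 2)) *
              (1 - Real.exp (-(l * π * x ^ 2)))) =
      (1 / 5) * Real.exp (-(4 * b)) - (2 / 15) * Real.exp (-(5 * b)) +
        Real.sqrt (π * b) *
          ((Real.sqrt 6 / 9) * Real.exp (-(5 * b / 6)) * erfc ((5 / 6) * Real.sqrt (6 * b)) -
            (4 * Real.sqrt 5 / 25) * Real.exp (-(4 * b / 5)) *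
              erfc ((4 / 5) * Real.sqrt (5 * b))) := by
  have ha : 0 < l * π := mul_pos hl pi_pos
  have hi4 := int_aux (l * π) 4 r ha (by norm_num)
  have hi5 := int_aux (l * π) 5 r ha (by norm_num)
  have hsplit : ∫ y in Set.Ioi (0 : ℝ),
        2 * l * π * y * Real.exp (-(l * π * y ^ 2)) *
          (∫ x in Set.Ioi (r + y),
            8 * l * π * x * Real.exp (-(4 * l * π * x ^ 2)) *
              (1 - Real.exp (-(l * π * x ^ 2))))
      = (2 * (l * π)) * (∫ y in Set.Ioi (0:ℝ),
            y * Real.exp (-(l * π * y ^ 2)) * Real.exp (-(4 * (l * π) * (r + y) ^ 2)))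
        - (8 * (l * π) / 5) * (∫ y in Set.Ioi (0:ℝ),
            y * Real.exp (-(l * π * y ^ 2)) * Real.exp (-(5 * (l * π) * (r + y) ^ 2))) := by
    rw [← integral_const_mul, ← integral_const_mul,
      ← integral_sub (hi4.const_mul _) (hi5.const_mul _)]
    refine setIntegral_congr_fun measurableSet_Ioi fun y _ => ?_
    rw [inner_int l hl (r + y)]
    ring
  rw [hsplit, outer_int (l * π) r 4 ha hr (by norm_num),
    outer_int (l * π) r 5 ha hr (by norm_num)]
  subst hb
  have h14 : (1:ℝ) + 4 = 5 := by norm_num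
  have h15 : (1:ℝ) + 5 = 6 := by norm_num
  rw [h14, h15]
  set s := Real.sqrt (l * π) with hsdef
  have hs0 : 0 < s := Real.sqrt_pos.2 ha
  have hs2 : s ^ 2 = l * π := Real.sq_sqrt ha.le
  have h5p : (0:ℝ) < Real.sqrt 5 := Real.sqrt_pos.2 (by norm_num)
  have h6p : (0:ℝ) < Real.sqrt 6 := Real.sqrt_pos.2 (by norm_num)
  have h5m : Real.sqrt 5 * Real.sqrt 5 = 5 := Real.mul_self_sqrt (by norm_num)
  have h6m : Real.sqrt 6 * Real.sqrt 6 = 6 := Real.mul_self_sqrt (by norm_num)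
  have hq1 : Real.sqrt ((l * π) * 5) = s * Real.sqrt 5 := Real.sqrt_mul ha.le 5
  have hq2 : Real.sqrt ((l * π) * 6) = s * Real.sqrt 6 := Real.sqrt_mul ha.le 6
  have hbr : Real.sqrt (l * π * r ^ 2) = s * r := by
    rw [Real.sqrt_mul ha.le, Real.sqrt_sq hr]
  have hq3 : Real.sqrt (π * (l * π * r ^ 2)) = Real.sqrt π * (s * r) := by
    rw [Real.sqrt_mul pi_pos.le, hbr]
  have hq4 : Real.sqrt (5 * (l * π * r ^ 2)) = Real.sqrt 5 * (s * r) := by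
    rw [Real.sqrt_mul (by norm_num : (0:ℝ) ≤ 5), hbr]
  have hq5 : Real.sqrt (6 * (l * π * r ^ 2)) = Real.sqrt 6 * (s * r) := by
    rw [Real.sqrt_mul (by norm_num : (0:ℝ) ≤ 6), hbr]
  have hA4 : Real.sqrt ((l * π) * 5) * (4 * r / 5) = 4 / 5 * Real.sqrt (5 * (l * π * r ^ 2)) := by
    rw [hq1, hq4]; ring
  have hA5 : Real.sqrt ((l * π) * 6) * (5 * r / 6) = 5 / 6 * Real.sqrt (6 * (l * π * r ^ 2)) := by
    rw [hq2, hq5]; ring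
  rw [hA4, hA5, hq1, hq2, hq3,
    show 4 * (l * π) * r ^ 2 = 4 * (l * π * r ^ 2) from by ring,
    show 5 * (l * π) * r ^ 2 = 5 * (l * π * r ^ 2) from by ring,
    show l * π = s ^ 2 from hs2.symm]
  field_simp
  ring_nf
  rw [Real.sq_sqrt (by norm_num : (0:ℝ) ≤ 6), Real.sq_sqrt (by norm_num : (0:ℝ) ≤ 5)]
  ring
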